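/- arXiv:1002.4640 — 2 statements merged into one kernel-verified Lean document; each statement's English description precedes it below -/
import Mathlib

section
/- Let φ : ℍ → ℍ be analytic with nontangential boundary value function φ* on ℝ satisfying Im(φ*(x)) > 0 for almost every x ∈ ℝ. Then for every f ∈ H²(ℍ), the boundary value function of C_φ f is given by (C_φ f)*(x) = (1/(2πi)) ∫_{-∞}^{∞} f*(ξ)/(ξ - φ*(x)) dξ for almost every x ∈ ℝ. -/
open Complex MeasureTheory Filter Set Topology

lemma inv_memL2 (w : ℂ) (hw : w.im ≠ 0) :
    MemLp (fun ξ : ℝ => ‖(ξ : ℂ) - w‖⁻¹) 2 (volume : Measure ℝ) := by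
  have hmeas : AEStronglyMeasurable (fun ξ : ℝ => ‖(ξ : ℂ) - w‖⁻¹) volume := by
    refine (Continuous.aestronglyMeasurable ?_)
    exact ((Complex.continuous_ofReal.sub continuous_const).norm).inv₀ (fun ξ => by
      simp only [ne_eq, norm_eq_zero, sub_eq_zero]
      intro h
      apply hw
      simp only [Pi.sub_apply, sub_eq_zero] at h
      rw [← h]
      simp)
  rw [memLp_two_iff_integrable_sq hmeas]
  have hb2 : (w.im) ≠ 0 := hw
  have h1 : Integrable (fun x : ℝ => (1 + x ^ 2)⁻¹) := integrable_inv_one_add_sq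
  have h2 : Integrable (fun x : ℝ => (w.im ^ 2)⁻¹ * (1 + (x / w.im) ^ 2)⁻¹) :=
    (h1.comp_div hb2).const_mul _
  have h3 : Integrable (fun x : ℝ => (x ^ 2 + w.im ^ 2)⁻¹) := by
    refine h2.congr (Eventually.of_forall fun x => ?_)
    field_simp
    ring
  have h4 := h3.comp_sub_right w.re
  refine h4.congr (Eventually.of_forall fun x => ?_)
  have hne : ((x : ℂ) - w) ≠ 0 := by
    intro h
    apply hw
    have := congrArg Complex.im h
    simpa using this.symm
  have h5 : ‖(x : ℂ) - w‖ ^ 2 = (x - w.re) ^ 2 + w.im ^ 2 := by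
    rw [Complex.sq_norm, Complex.normSq_apply]
    simp
    ring
  show ((x - w.re) ^ 2 + w.im ^ 2)⁻¹ = ‖(x : ℂ) - w‖⁻¹ ^ 2
  rw [inv_pow, h5]

lemma cont_aux (fs : ℝ → ℂ) (hfs : MemLp fs 2 (volume : Measure ℝ)) (w : ℂ) (hw : 0 < w.im) :
    Tendsto (fun z : ℂ => ∫ ξ : ℝ, fs ξ / ((ξ : ℂ) - z)) (nhds w)
      (nhds (∫ ξ : ℝ, fs ξ / ((ξ : ℂ) - w))) := by
  set δ : ℝ := w.im / 2 with hδ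
  have hδpos : 0 < δ := by positivity
  have hbound_int : Integrable (fun ξ : ℝ => ‖(ξ : ℂ) - w‖⁻¹ * (2 * ‖fs ξ‖)) volume := by
    have h1 : MemLp (fun ξ : ℝ => ‖(ξ : ℂ) - w‖⁻¹) 2 (volume : Measure ℝ) :=
      inv_memL2 w (ne_of_gt hw)
    have h2 : MemLp (fun ξ : ℝ => 2 * ‖fs ξ‖) 2 (volume : Measure ℝ) := hfs.norm.const_mul 2
    have h3 : MemLp ((fun ξ : ℝ => ‖(ξ : ℂ) - w‖⁻¹) • (fun ξ : ℝ => 2 * ‖fs ξ‖)) 1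
        (volume : Measure ℝ) := by
      refine MemLp.smul h2 h1 (hpqr := ⟨?_⟩)
      simp [ENNReal.inv_two_add_inv_two]
    rw [memLp_one_iff_integrable] at h3
    exact h3
  apply tendsto_integral_filter_of_dominated_convergence
    (fun ξ : ℝ => ‖(ξ : ℂ) - w‖⁻¹ * (2 * ‖fs ξ‖))
  · filter_upwards with z
    have hm : AEStronglyMeasurable (fun ξ : ℝ => ((ξ : ℂ) - z)⁻¹) volume :=
      ((Complex.measurable_ofReal.sub measurable_const).inv).aestronglyMeasurable
    exact (hfs.1.mul hm).congr (Eventually.of_forall fun ξ => (div_eq_mul_inv _ _).symm)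
  · filter_upwards [Metric.ball_mem_nhds w hδpos] with z hz
    filter_upwards with ξ
    have hzw : ‖w - z‖ < δ := by rwa [← dist_eq_norm, dist_comm, ← Metric.mem_ball]
    have hzim : δ < z.im := by
      have h1 : |(w - z).im| ≤ ‖w - z‖ := Complex.abs_im_le_norm _
      have h3 : w.im - z.im ≤ |(w - z).im| := by
        rw [Complex.sub_im]; exact le_abs_self _
      have : w.im - z.im < δ := lt_of_le_of_lt (h3.trans h1) hzw
      linarith [hδ]
    have habs : |((ξ : ℂ) - z).im| = z.im := by
      rw [Complex.sub_im, Complex.ofReal_im, zero_sub, abs_neg, abs_of_pos (hδpos.trans hzim)]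
    have hile : |((ξ : ℂ) - z).im| ≤ ‖(ξ : ℂ) - z‖ := Complex.abs_im_le_norm _
    have hz0 : (0:ℝ) < ‖(ξ : ℂ) - z‖ := by linarith
    have hδz : δ ≤ ‖(ξ : ℂ) - z‖ := by linarith
    have hw0 : (0:ℝ) < ‖(ξ : ℂ) - w‖ := by
      have h2 : |((ξ : ℂ) - w).im| = w.im := by
        rw [Complex.sub_im, Complex.ofReal_im, zero_sub, abs_neg, abs_of_pos hw]
      have h3 : |((ξ : ℂ) - w).im| ≤ ‖(ξ : ℂ) - w‖ := Complex.abs_im_le_norm _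
      linarith
    have hkey : ‖(ξ : ℂ) - w‖ ≤ 2 * ‖(ξ : ℂ) - z‖ := by
      have htri := dist_triangle ((ξ : ℂ)) z w
      simp only [dist_eq_norm] at htri
      have h4 : ‖z - w‖ = ‖w - z‖ := norm_sub_rev _ _
      linarith
    rw [norm_div]
    have hmain : ‖fs ξ‖ / ‖(ξ : ℂ) - z‖ ≤ 2 * ‖fs ξ‖ / ‖(ξ : ℂ) - w‖ := by
      rw [div_le_div_iff₀ hz0 hw0]
      nlinarith [norm_nonneg (fs ξ)]
    calc ‖fs ξ‖ / ‖(ξ : ℂ) - z‖ ≤ 2 * ‖fs ξ‖ / ‖(ξ : ℂ) - w‖ := hmain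
      _ = ‖(ξ : ℂ) - w‖⁻¹ * (2 * ‖fs ξ‖) := by rw [div_eq_inv_mul]
  · exact hbound_int
  · filter_upwards with ξ
    have hne : (ξ : ℂ) - w ≠ 0 := by
      intro h
      have := congrArg Complex.im h
      simp at this
      simp [this] at hw
    have hc : ContinuousAt (fun z : ℂ => fs ξ / ((ξ : ℂ) - z)) w :=
      ContinuousAt.div continuousAt_const
        ((continuous_const.sub continuous_id).continuousAt) hne
    exact hc.tendsto

/-- If `φ` is an analytic self-map of the upper half-plane whose
nontangential (here: vertical) boundary values `φ*` satisfy `Im φ*(x) > 0` a.e., and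
`f ∈ H²(ℍ)` (analytic, with boundary values `f* ∈ L²(ℝ)` reproducing `f` by the Cauchy
integral), then a.e. `x` the boundary value of `C_φ f` is
`(1/(2πi)) ∫ f*(ξ)/(ξ - φ*(x)) dξ`. -/
theorem stmt3 (φ : ℂ → ℂ)
    (hφa : DifferentiableOn ℂ φ {z : ℂ | 0 < z.im})
    (hφmaps : ∀ z : ℂ, 0 < z.im → 0 < (φ z).im)
    (φs : ℝ → ℂ)
    (hφs : ∀ᵐ x : ℝ, Tendsto (fun t : ℝ => φ ((x : ℂ) + (t : ℂ) * Complex.I))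
        (nhdsWithin 0 (Set.Ioi 0)) (nhds (φs x)) ∧ 0 < (φs x).im)
    (f : ℂ → ℂ) (hfa : DifferentiableOn ℂ f {z : ℂ | 0 < z.im})
    (fs : ℝ → ℂ) (hfs : MeasureTheory.MemLp fs 2 (volume : Measure ℝ))
    (hCauchy : ∀ z : ℂ, 0 < z.im →
      f z = (1 / (2 * (Real.pi : ℂ) * Complex.I)) * ∫ x : ℝ, fs x / ((x : ℂ) - z)) :
    ∀ᵐ x : ℝ, Tendsto (fun t : ℝ => f (φ ((x : ℂ) + (t : ℂ) * Complex.I)))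
      (nhdsWithin 0 (Set.Ioi 0))
      (nhds ((1 / (2 * (Real.pi : ℂ) * Complex.I)) * ∫ ξ : ℝ, fs ξ / ((ξ : ℂ) - φs x))) := by
  filter_upwards [hφs] with x hx
  obtain ⟨h1, h2⟩ := hx
  have hkey : Tendsto (fun t : ℝ =>
      (1 / (2 * (Real.pi : ℂ) * Complex.I)) *
        ∫ ξ : ℝ, fs ξ / ((ξ : ℂ) - φ ((x : ℂ) + (t : ℂ) * Complex.I)))
      (nhdsWithin 0 (Set.Ioi 0))
      (nhds ((1 / (2 * (Real.pi : ℂ) * Complex.I)) * ∫ ξ : ℝ, fs ξ / ((ξ : ℂ) - φs x))) :=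
    (((cont_aux fs hfs (φs x) h2).comp h1).const_mul _)
  refine hkey.congr' ?_
  filter_upwards [self_mem_nhdsWithin] with t ht
  have him : 0 < ((x : ℂ) + (t : ℂ) * Complex.I).im := by
    simpa using (ht : (0:ℝ) < t)
  exact (hCauchy _ (hφmaps _ him)).symm
end

section
/- Let a ∈ QC(ℝ) and ϑ ∈ C([0,∞]). Then the commutator [T_a, D_ϑ] = T_a D_ϑ − D_ϑ T_a is a compact operator on H²(ℍ). -/
open Complex MeasureTheory Set Filter

noncomputable section

/-- The space `L²(ℝ)`; the Hardy space `H²(ℍ)` is the range of the Riesz projection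
`P = F⁻¹ M_{χ_{[0,∞)}} F` in it. -/
abbrev L2R := Lp ℂ 2 (volume : Measure ℝ)

/-- `F` is the Fourier transform on `L²(ℝ)`, pinned down by its usual integral formula
on integrable representatives. -/
def IsFourierL2 (F : L2R ≃ₗᵢ[ℂ] L2R) : Prop :=
  ∀ f : L2R, Integrable (f : ℝ → ℂ) volume →
    (F f : ℝ → ℂ) =ᵐ[volume]
      fun t => (1 / Real.sqrt (2 * Real.pi) : ℝ) •
        ∫ x : ℝ, Complex.exp (-Complex.I * (t : ℂ) * (x : ℂ)) * f x

namespace Stmt7Aux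

open scoped NNReal ENNReal

lemma memLp_mul {g : ℝ → ℂ} (hg : Measurable g) {C : ℝ} (hb : ∀ x, ‖g x‖ ≤ C) (f : L2R) :
    MemLp (fun x => g x * (f : ℝ → ℂ) x) 2 volume := by
  have h := (Lp.memLp f).smul (r := 2) (memLp_top_of_bound hg.aestronglyMeasurable C
      (Filter.Eventually.of_forall hb))
  exact h.ae_eq (Filter.Eventually.of_forall fun x => by
    simp [Pi.smul_apply', smul_eq_mul, mul_comm])

lemma norm_le_of_ae {h f : L2R} {ε : ℝ} (hε : 0 ≤ ε)
    (hae : ∀ᵐ x ∂(volume : Measure ℝ), ‖(h : ℝ → ℂ) x‖ ≤ ε * ‖(f : ℝ → ℂ) x‖) :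
    ‖h‖ ≤ ε * ‖f‖ := by
  rw [Lp.norm_def, Lp.norm_def]
  have hle : eLpNorm (h : ℝ → ℂ) 2 volume ≤ ε.toNNReal • eLpNorm (f : ℝ → ℂ) 2 volume := by
    apply eLpNorm_le_nnreal_smul_eLpNorm_of_ae_le_mul
    filter_upwards [hae] with x hx
    rw [← NNReal.coe_le_coe]
    push_cast
    simpa [Real.coe_toNNReal ε hε] using hx
  calc (eLpNorm (h : ℝ → ℂ) 2 volume).toReal
      ≤ (ε.toNNReal • eLpNorm (f : ℝ → ℂ) 2 volume).toReal := by
        apply ENNReal.toReal_mono _ hle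
        simp only [ENNReal.smul_def, smul_eq_mul]
        exact ENNReal.mul_ne_top (by simp) (Lp.eLpNorm_lt_top f).ne
    _ = ε * (eLpNorm (f : ℝ → ℂ) 2 volume).toReal := by
        simp [ENNReal.smul_def, ENNReal.toReal_mul, Real.coe_toNNReal ε hε]

/-- Multiplication by a bounded measurable function, as a CLM on `L²(ℝ)`. -/
def mulCLM (g : ℝ → ℂ) (hg : Measurable g) (C : ℝ) (hb : ∀ x, ‖g x‖ ≤ C) : L2R →L[ℂ] L2R := by
  refine LinearMap.mkContinuous
    { toFun := fun f => (memLp_mul hg hb f).toLp _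
      map_add' := ?_
      map_smul' := ?_ } C ?_
  · intro f₁ f₂
    apply Lp.ext
    filter_upwards [MemLp.coeFn_toLp (memLp_mul hg hb (f₁ + f₂)),
      Lp.coeFn_add ((memLp_mul hg hb f₁).toLp _) ((memLp_mul hg hb f₂).toLp _),
      MemLp.coeFn_toLp (memLp_mul hg hb f₁), MemLp.coeFn_toLp (memLp_mul hg hb f₂),
      Lp.coeFn_add f₁ f₂] with x h1 h2 h3 h4 h5
    rw [h1, h2]
    simp only [Pi.add_apply] at h5 ⊢
    rw [h3, h4, h5]; ring
  · intro c f
    apply Lp.ext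
    filter_upwards [MemLp.coeFn_toLp (memLp_mul hg hb (c • f)),
      Lp.coeFn_smul c ((memLp_mul hg hb f).toLp _),
      MemLp.coeFn_toLp (memLp_mul hg hb f), Lp.coeFn_smul c f] with x h1 h2 h3 h4
    rw [RingHom.id_apply, h1, h2]
    simp only [Pi.smul_apply, smul_eq_mul] at h4 ⊢
    rw [h3, h4]; ring
  · intro f
    have hC : 0 ≤ C := le_trans (norm_nonneg _) (hb 0)
    have : ‖(memLp_mul hg hb f).toLp _‖ ≤ C * ‖f‖ := by
      apply norm_le_of_ae hC
      filter_upwards [MemLp.coeFn_toLp (memLp_mul hg hb f)] with x hx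
      rw [hx]
      calc ‖g x * (f : ℝ → ℂ) x‖ = ‖g x‖ * ‖(f : ℝ → ℂ) x‖ := norm_mul _ _
        _ ≤ C * ‖(f : ℝ → ℂ) x‖ := mul_le_mul_of_nonneg_right (hb x) (norm_nonneg _)
    simpa using this

lemma mulCLM_coe (g : ℝ → ℂ) (hg : Measurable g) (C : ℝ) (hb : ∀ x, ‖g x‖ ≤ C) (f : L2R) :
    (mulCLM g hg C hb f : ℝ → ℂ) =ᵐ[volume] fun x => g x * (f : ℝ → ℂ) x :=
  (memLp_mul hg hb f).coeFn_toLp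

/-- Translation `f ↦ f(· + s)` as a CLM on `L²(ℝ)`. -/
def transCLM (s : ℝ) : L2R →L[ℂ] L2R :=
  (Lp.compMeasurePreservingₗᵢ (E := ℂ) (p := 2) ℂ (fun x => x + s)
    (measurePreserving_add_right volume s)).toContinuousLinearMap

lemma transCLM_coe (s : ℝ) (f : L2R) :
    (transCLM s f : ℝ → ℂ) =ᵐ[volume] fun x => f (x + s) :=
  Lp.coeFn_compMeasurePreserving f _

/-- Extension principle: two CLMs on `L²` agreeing on integrable elements agree. -/
lemma clm_ext_integrable {T₁ T₂ : L2R →L[ℂ] L2R}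
    (h : ∀ f : L2R, Integrable (f : ℝ → ℂ) volume → T₁ f = T₂ f) : T₁ = T₂ := by
  have hd : Dense (Lp.simpleFunc ℂ 2 (volume : Measure ℝ) : Set L2R) :=
    Lp.simpleFunc.dense (by norm_num)
  apply ContinuousLinearMap.coeFn_injective
  refine Continuous.ext_on hd T₁.continuous T₂.continuous ?_
  rintro f hf
  apply h
  obtain ⟨g, hg⟩ : ∃ g : Lp.simpleFunc ℂ 2 (volume : Measure ℝ), (g : L2R) = f := ⟨⟨f, hf⟩, rfl⟩
  have h1 : (Lp.simpleFunc.toSimpleFunc g : ℝ → ℂ) =ᵐ[volume] (f : ℝ → ℂ) := by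
    rw [← hg]; exact Lp.simpleFunc.toSimpleFunc_eq_toFun g
  have h2 : Integrable (Lp.simpleFunc.toSimpleFunc g : ℝ → ℂ) volume := by
    rw [← memLp_one_iff_integrable]
    refine (SimpleFunc.memLp_iff_integrable one_ne_zero ENNReal.one_ne_top).mpr ?_
    rw [SimpleFunc.integrable_iff]
    intro y hy
    exact SimpleFunc.measure_preimage_lt_top_of_memLp (by norm_num) (by norm_num) _
      (Lp.simpleFunc.memLp g) y hy
  exact h2.congr h1

lemma exp_meas (s : ℝ) : Measurable fun x : ℝ => Complex.exp (Complex.I * s * x) :=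
  (Complex.continuous_exp.comp (by continuity)).measurable

lemma exp_bound (s : ℝ) : ∀ x : ℝ, ‖Complex.exp (Complex.I * s * x)‖ ≤ 1 := by
  intro x
  rw [Complex.norm_exp]
  simp [Complex.mul_re]

/-- Modulation operator `E_s : f ↦ e^{isx} f`. -/
def modCLM (s : ℝ) : L2R →L[ℂ] L2R := mulCLM _ (exp_meas s) 1 (exp_bound s)

lemma modCLM_coe (s : ℝ) (f : L2R) :
    (modCLM s f : ℝ → ℂ) =ᵐ[volume]
      fun x => Complex.exp (Complex.I * s * x) * (f : ℝ → ℂ) x :=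
  mulCLM_coe _ _ _ _ f

/-- The key intertwining: `F ∘ E_s = V_{-s} ∘ F`. -/
lemma intertwine (F : L2R ≃ₗᵢ[ℂ] L2R) (hF : IsFourierL2 F) (s : ℝ) (f : L2R) :
    F (modCLM s f) = transCLM (-s) (F f) := by
  suffices h : (F.toContinuousLinearEquiv.toContinuousLinearMap ∘L modCLM s) =
      (transCLM (-s) ∘L F.toContinuousLinearEquiv.toContinuousLinearMap) by
    have := ContinuousLinearMap.ext_iff.mp h f
    simpa using this
  apply clm_ext_integrable
  intro f hf
  simp only [ContinuousLinearMap.comp_apply, ContinuousLinearEquiv.coe_coe,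
    LinearIsometryEquiv.coe_toContinuousLinearEquiv]
  have hint : Integrable (modCLM s f : ℝ → ℂ) volume := by
    refine Integrable.congr ?_ (modCLM_coe s f).symm
    exact hf.bdd_mul (exp_meas s).aestronglyMeasurable (Filter.Eventually.of_forall (exp_bound s))
  have h1 := hF _ hint
  have h2 := hF _ hf
  have h3 : (fun t => (F f : ℝ → ℂ) (t + -s)) =ᵐ[volume]
      (fun t => ((1 / Real.sqrt (2 * Real.pi) : ℝ) •
        ∫ x : ℝ, Complex.exp (-Complex.I * ((t + -s : ℝ) : ℂ) * (x : ℂ)) * f x)) :=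
    (measurePreserving_add_right volume (-s)).quasiMeasurePreserving.ae_eq h2
  apply Lp.ext
  filter_upwards [h1, transCLM_coe (-s) (F f), h3] with t ht1 ht2 ht3
  rw [ht1, ht2, ht3]
  congr 1
  have step1 : ∫ x : ℝ, Complex.exp (-Complex.I * (t : ℂ) * (x : ℂ)) * (modCLM s f : ℝ → ℂ) x
      = ∫ x : ℝ, Complex.exp (-Complex.I * (t : ℂ) * (x : ℂ)) *
          (Complex.exp (Complex.I * s * x) * (f : ℝ → ℂ) x) := by
    apply integral_congr_ae
    filter_upwards [modCLM_coe s f] with x hx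
    rw [hx]
  rw [step1]
  apply integral_congr_ae
  apply Filter.Eventually.of_forall
  intro x
  have harg : -Complex.I * (t : ℂ) * (x : ℂ) + Complex.I * (s : ℂ) * (x : ℂ)
      = -Complex.I * ((t + -s : ℝ) : ℂ) * (x : ℂ) := by push_cast; ring
  beta_reduce
  rw [← mul_assoc, ← Complex.exp_add, harg]

/-- indicator of `[s, ∞)` as a symbol -/
def indSym (s : ℝ) : ℝ → ℂ := fun x => Set.indicator (Set.Ici (0 : ℝ)) (fun _ => (1 : ℂ)) (x - s)

lemma indSym_meas (s : ℝ) : Measurable (indSym s) :=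
  ((measurable_const.indicator measurableSet_Ici)).comp (measurable_id.sub_const s)

lemma indSym_bound (s : ℝ) : ∀ x, ‖indSym s x‖ ≤ 1 := by
  intro x
  unfold indSym
  by_cases h : x - s ∈ Set.Ici (0 : ℝ) <;> simp [h]

lemma indSym_one {s x : ℝ} (h : s ≤ x) : indSym s x = 1 := by
  simp [indSym, Set.indicator_of_mem, Set.mem_Ici, sub_nonneg.mpr h]

lemma indSym_zero {s x : ℝ} (h : x < s) : indSym s x = 0 := by
  simp [indSym, Set.indicator_of_notMem, Set.mem_Ici, sub_nonneg, not_le.mpr h]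

/-- multiplication by the indicator of `[s,∞)` -/
def mulInd (s : ℝ) : L2R →L[ℂ] L2R := mulCLM _ (indSym_meas s) 1 (indSym_bound s)

lemma mulInd_coe (s : ℝ) (f : L2R) :
    (mulInd s f : ℝ → ℂ) =ᵐ[volume] fun x => indSym s x * (f : ℝ → ℂ) x :=
  mulCLM_coe _ _ _ _ f

lemma trans_chi (Mχ : L2R →L[ℂ] L2R)
    (hMχ : ∀ f : L2R, (Mχ f : ℝ → ℂ) =ᵐ[volume]
      fun x => Set.indicator (Set.Ici (0 : ℝ)) (fun _ => (1 : ℂ)) x * f x)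
    (s : ℝ) (u : L2R) :
    transCLM (-s) (Mχ (transCLM s u)) = mulInd s u := by
  have qmp := (measurePreserving_add_right volume (-s)).quasiMeasurePreserving
  apply Lp.ext
  filter_upwards [transCLM_coe (-s) (Mχ (transCLM s u)),
    qmp.ae_eq (hMχ (transCLM s u)), qmp.ae_eq (transCLM_coe s u), mulInd_coe s u]
    with x h1 h2 h3 h4
  simp only [Function.comp] at h2 h3
  rw [h1, h2, h3, h4, neg_add_cancel_right, ← sub_eq_add_neg]
  rfl

lemma modCLM_cancel (s : ℝ) (f : L2R) : modCLM s (modCLM (-s) f) = f := by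
  apply Lp.ext
  filter_upwards [modCLM_coe s (modCLM (-s) f), modCLM_coe (-s) f] with x h1 h2
  rw [h1, h2, ← mul_assoc, ← Complex.exp_add]
  have : Complex.I * (s : ℂ) * (x : ℂ) + Complex.I * ((-s : ℝ) : ℂ) * (x : ℂ) = 0 := by
    push_cast; ring
  rw [this, Complex.exp_zero, one_mul]

lemma Ma_mul_comm {a : ℝ → ℂ} (Ma : L2R →L[ℂ] L2R)
    (hMa : ∀ f : L2R, (Ma f : ℝ → ℂ) =ᵐ[volume] fun x => a x * f x)
    (g : ℝ → ℂ) (hg : Measurable g) (C : ℝ) (hb : ∀ x, ‖g x‖ ≤ C) (f : L2R) :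
    Ma (mulCLM g hg C hb f) = mulCLM g hg C hb (Ma f) := by
  apply Lp.ext
  filter_upwards [hMa (mulCLM g hg C hb f), mulCLM_coe g hg C hb f,
    mulCLM_coe g hg C hb (Ma f), hMa f] with x h1 h2 h3 h4
  rw [h1, h2, h3, h4]; ring

/-- `R_s := F⁻¹ M_{1_{[s,∞)}} F` equals `E_s P E_{-s}`, pointwise. -/
lemma Rs_eq (F : L2R ≃ₗᵢ[ℂ] L2R) (hF : IsFourierL2 F) (Mχ : L2R →L[ℂ] L2R)
    (hMχ : ∀ f : L2R, (Mχ f : ℝ → ℂ) =ᵐ[volume]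
      fun x => Set.indicator (Set.Ici (0 : ℝ)) (fun _ => (1 : ℂ)) x * f x)
    (s : ℝ) (f : L2R) :
    F.symm (mulInd s (F f)) = modCLM s (F.symm (Mχ (F (modCLM (-s) f)))) := by
  have h1 : F (modCLM (-s) f) = transCLM s (F f) := by
    simpa using intertwine F hF (-s) f
  have h2 := intertwine F hF s (F.symm (Mχ (F (modCLM (-s) f))))
  apply F.injective
  rw [h2, F.apply_symm_apply, F.apply_symm_apply, h1, trans_chi Mχ hMχ s (F f)]

/-- step symbol -/
def stepSym (c : ℂ) (m : ℕ) (pts : ℕ → ℝ) (coef : ℕ → ℂ) : ℝ → ℂ :=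
  fun x => c + ∑ i ∈ Finset.range m, coef i * indSym (pts i) x

/-- step multiplication operator -/
def stepOp (c : ℂ) (m : ℕ) (pts : ℕ → ℝ) (coef : ℕ → ℂ) : L2R →L[ℂ] L2R :=
  c • ContinuousLinearMap.id ℂ L2R + ∑ i ∈ Finset.range m, coef i • mulInd (pts i)

lemma stepOp_coe (c : ℂ) (m : ℕ) (pts : ℕ → ℝ) (coef : ℕ → ℂ) (f : L2R) :
    (stepOp c m pts coef f : ℝ → ℂ) =ᵐ[volume]
      fun x => stepSym c m pts coef x * (f : ℝ → ℂ) x := by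
  induction m with
  | zero =>
      simp only [stepOp, stepSym, Finset.range_zero, Finset.sum_empty, add_zero]
      filter_upwards [Lp.coeFn_smul c f] with x hx
      simpa using hx
  | succ m ih =>
      have hop : stepOp c (m+1) pts coef = stepOp c m pts coef + coef m • mulInd (pts m) := by
        rw [stepOp, stepOp, Finset.sum_range_succ, add_assoc]
      rw [hop]
      filter_upwards [Lp.coeFn_add (stepOp c m pts coef f) ((coef m • mulInd (pts m)) f),
        ih, Lp.coeFn_smul (coef m) (mulInd (pts m) f), mulInd_coe (pts m) f] with x h1 h2 h3 h4
      have : (stepOp c m pts coef + coef m • mulInd (pts m)) f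
          = stepOp c m pts coef f + (coef m • mulInd (pts m)) f := rfl
      rw [this, h1]
      simp only [Pi.add_apply, ContinuousLinearMap.smul_apply] at *
      rw [h2, h3]
      simp only [Pi.smul_apply, smul_eq_mul] at *
      rw [h4]
      simp only [stepSym, Finset.sum_range_succ]
      ring

/-- step approximation of a continuous symbol with a limit at `+∞`. -/
lemma approx (ϑ : ℝ → ℂ) (hϑc : Continuous ϑ) (L : ℂ) (hϑlim : Tendsto ϑ atTop (nhds L))
    {ε : ℝ} (hε : 0 < ε) :
    ∃ (c : ℂ) (m : ℕ) (pts : ℕ → ℝ) (coef : ℕ → ℂ),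
      (∀ x, ‖ϑ (max x 0) - stepSym c m pts coef x‖ ≤ ε) := by
  obtain ⟨R₀, hR₀⟩ := (Metric.tendsto_atTop.mp hϑlim ε hε)
  set R : ℝ := max R₀ 1 with hRdef
  have hR : 0 < R := lt_of_lt_of_le one_pos (le_max_right _ _)
  have huc := (isCompact_Icc (a := (0:ℝ)) (b := R)).uniformContinuousOn_of_continuous
    hϑc.continuousOn
  obtain ⟨δ, hδpos, hδ⟩ := Metric.uniformContinuousOn_iff.mp huc ε hε
  obtain ⟨n, hn⟩ := exists_nat_gt (R / δ)
  have hnpos : 0 < (n : ℝ) := lt_of_lt_of_le (div_pos hR hδpos) hn.le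
  have hn0 : 0 < n := by exact_mod_cast hnpos
  have hRn : R / n < δ := by
    rw [div_lt_iff₀ hnpos]
    rw [div_lt_iff₀ hδpos] at hn
    linarith [hn]
  set t : ℕ → ℝ := fun i => R * i / n with ht
  set g : ℕ → ℂ := fun i => ϑ (t i) with hg
  set pts : ℕ → ℝ := fun i => if i < n then t (i + 1) else R with hpts
  set coef : ℕ → ℂ := fun i => if i < n then g (i + 1) - g i else L - g n with hcoef
  refine ⟨ϑ 0, n + 1, pts, coef, ?_⟩
  intro x
  have hiff : ∀ y : ℝ, (R * y / n ≤ x ↔ y ≤ x * n / R) := by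
    intro y
    rw [div_le_iff₀ hnpos, le_div_iff₀ hR, mul_comm (R : ℝ) y]
  have hiff' : ∀ i : ℕ, (t i ≤ x ↔ (i:ℝ) ≤ x * n / R) := fun i => hiff i
  have htpos : ∀ i : ℕ, 0 < i → 0 < t i := by
    intro i hi
    have : (0:ℝ) < i := by exact_mod_cast hi
    exact div_pos (mul_pos hR this) hnpos
  have hsum : stepSym (ϑ 0) (n+1) pts coef x =
      ϑ 0 + (∑ i ∈ Finset.range n, (g (i+1) - g i) * indSym (t (i+1)) x)
        + (L - g n) * indSym R x := by
    rw [stepSym, Finset.sum_range_succ, hpts, hcoef]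
    simp only [lt_irrefl n, if_false, if_neg]
    rw [← add_assoc]
    congr 2
    apply Finset.sum_congr rfl
    intro i hi
    simp only [Finset.mem_range.mp hi, if_true, if_pos]
  rw [hsum]
  by_cases hx0 : x < 0
  · have hz : ∀ i ∈ Finset.range n, (g (i+1) - g i) * indSym (t (i+1)) x = 0 := by
      intro i _
      rw [indSym_zero (lt_of_lt_of_le hx0 (htpos (i+1) (Nat.succ_pos i)).le), mul_zero]
    rw [Finset.sum_congr rfl hz, Finset.sum_const_zero, indSym_zero (lt_of_lt_of_le hx0 hR.le),
      mul_zero, add_zero, add_zero, max_eq_right hx0.le, sub_self, norm_zero]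
    exact hε.le
  push_neg at hx0
  have hxmax : max x 0 = x := max_eq_left hx0
  set k : ℕ := min n ⌊x * n / R⌋₊ with hk
  have hkn : k ≤ n := min_le_left _ _
  have hxnR : 0 ≤ x * n / R := div_nonneg (mul_nonneg hx0 hnpos.le) hR.le
  have hsum2 : (∑ i ∈ Finset.range n, (g (i+1) - g i) * indSym (t (i+1)) x) = g k - g 0 := by
    have h1 : ∀ i ∈ Finset.range n, (g (i+1) - g i) * indSym (t (i+1)) x
        = if i < k then g (i+1) - g i else 0 := by
      intro i hi
      have hin := Finset.mem_range.mp hi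
      by_cases hik : t (i+1) ≤ x
      · have : (i+1) ≤ ⌊x * n / R⌋₊ := by
          rw [Nat.le_floor_iff hxnR]
          exact_mod_cast (hiff' (i+1)).mp hik
        rw [indSym_one hik, mul_one, if_pos (by omega)]
      · push_neg at hik
        have : ¬ ((i+1) ≤ ⌊x * n / R⌋₊) := by
          rw [Nat.le_floor_iff hxnR]
          intro hcon
          exact absurd ((hiff' (i+1)).mpr (by exact_mod_cast hcon)) (not_le.mpr hik)
        rw [indSym_zero hik, mul_zero, if_neg (by omega)]
    rw [Finset.sum_congr rfl h1]
    have h2 : ∑ i ∈ Finset.range n, (if i < k then g (i+1) - g i else 0)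
        = ∑ i ∈ Finset.range k, (g (i+1) - g i) := by
      rw [← Finset.sum_filter]
      congr 1
      ext i
      simp only [Finset.mem_filter, Finset.mem_range]
      omega
    rw [h2, Finset.sum_range_sub (f := g)]
  rw [hsum2]
  have hg0 : g 0 = ϑ 0 := by simp [hg, ht]
  have htn : t n = R := by
    simp only [ht]; field_simp
  by_cases hxR : R ≤ x
  · have hfl : n ≤ ⌊x * n / R⌋₊ := by
      rw [Nat.le_floor_iff hxnR]
      exact (hiff' n).mp (le_of_eq_of_le htn hxR)
    have hkn' : k = n := by omega
    rw [indSym_one hxR, mul_one, hg0, hkn']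
    have : ϑ 0 + (g n - ϑ 0) + (L - g n) = L := by ring
    rw [this, hxmax, ← dist_eq_norm]
    exact (hR₀ x (le_trans (le_max_left _ _) hxR)).le
  · push_neg at hxR
    have hfl2 : ⌊x * n / R⌋₊ < n := by
      by_contra hcon
      push_neg at hcon
      have : (n:ℝ) ≤ x * n / R := by
        calc (n:ℝ) ≤ (⌊x * n / R⌋₊ : ℝ) := by exact_mod_cast hcon
          _ ≤ x * n / R := Nat.floor_le hxnR
      have := (hiff' n).mpr this
      rw [htn] at this
      linarith
    have hkfl : k = ⌊x * n / R⌋₊ := by omega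
    rw [indSym_zero (by linarith : x < R), mul_zero, add_zero, hg0]
    have heq : ϑ 0 + (g k - ϑ 0) = g k := by ring
    rw [heq, hxmax]
    have htk_le : t k ≤ x := by
      apply (hiff' k).mpr
      rw [hkfl]
      exact_mod_cast Nat.floor_le hxnR
    have hx_lt : x < t (k+1) := by
      by_contra hcon
      push_neg at hcon
      have h3 := (hiff' (k+1)).mp hcon
      have h4 := Nat.lt_floor_add_one (x * n / R)
      rw [hkfl] at h3
      push_cast at h3 h4
      linarith
    have hstep : t (k+1) - t k = R / n := by
      simp only [ht]; push_cast; ring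
    have htk_mem : t k ∈ Set.Icc (0:ℝ) R :=
      ⟨div_nonneg (mul_nonneg hR.le (Nat.cast_nonneg k)) hnpos.le, le_trans htk_le hxR.le⟩
    have hx_mem : x ∈ Set.Icc (0:ℝ) R := ⟨hx0, hxR.le⟩
    have hdist : dist x (t k) < δ := by
      rw [Real.dist_eq, _root_.abs_of_nonneg (sub_nonneg.mpr htk_le)]
      linarith
    have := hδ x hx_mem (t k) htk_mem hdist
    rw [← dist_eq_norm]
    exact this.le

section Context

variable (F : L2R ≃ₗᵢ[ℂ] L2R) (hF : IsFourierL2 F) (Mχ : L2R →L[ℂ] L2R)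
  (hMχ : ∀ f : L2R, (Mχ f : ℝ → ℂ) =ᵐ[volume]
      fun x => Set.indicator (Set.Ici (0 : ℝ)) (fun _ => (1 : ℂ)) x * f x)
  (a : ℝ → ℂ) (Ma : L2R →L[ℂ] L2R)
  (hMa : ∀ f : L2R, (Ma f : ℝ → ℂ) =ᵐ[volume] fun x => a x * f x)

/-- `T_s = F⁻¹ M_{1_{[s,∞)}} F` as a CLM. -/
def Ts (s : ℝ) : L2R →L[ℂ] L2R :=
  F.symm.toContinuousLinearEquiv.toContinuousLinearMap ∘L mulInd s ∘L
    F.toContinuousLinearEquiv.toContinuousLinearMap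

/-- `P = F⁻¹ M_χ F` as a CLM. -/
def Pop : L2R →L[ℂ] L2R :=
  F.symm.toContinuousLinearEquiv.toContinuousLinearMap ∘L Mχ ∘L
    F.toContinuousLinearEquiv.toContinuousLinearMap

include hF hMχ hMa in
lemma comm_Ts_compact
    (hQC : IsCompactOperator ⇑(Pop F Mχ ∘L Ma - Ma ∘L Pop F Mχ)) (s : ℝ) :
    IsCompactOperator ⇑(Ma ∘L Ts F s - Ts F s ∘L Ma) := by
  have key : Ma ∘L Ts F s - Ts F s ∘L Ma =
      modCLM s ∘L (Ma ∘L Pop F Mχ - Pop F Mχ ∘L Ma) ∘L modCLM (-s) := by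
    ext f
    have hTs : ∀ u : L2R, Ts F s u = modCLM s (Pop F Mχ (modCLM (-s) u)) := by
      intro u
      have := Rs_eq F hF Mχ hMχ s u
      simp only [Ts, Pop, ContinuousLinearMap.comp_apply, ContinuousLinearEquiv.coe_coe,
        LinearIsometryEquiv.coe_toContinuousLinearEquiv]
      exact this
    simp only [ContinuousLinearMap.sub_apply, ContinuousLinearMap.comp_apply, map_sub]
    rw [hTs f, hTs (Ma f)]
    have e1 : Ma (modCLM s (Pop F Mχ (modCLM (-s) f)))
        = modCLM s (Ma (Pop F Mχ (modCLM (-s) f))) := Ma_mul_comm Ma hMa _ _ _ _ _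
    have e2 : modCLM (-s) (Ma f) = Ma (modCLM (-s) f) := (Ma_mul_comm Ma hMa _ _ _ _ _).symm
    rw [e1, e2]
  rw [key]
  have hK : IsCompactOperator ⇑(Ma ∘L Pop F Mχ - Pop F Mχ ∘L Ma) := by
    have : Ma ∘L Pop F Mχ - Pop F Mχ ∘L Ma = -(Pop F Mχ ∘L Ma - Ma ∘L Pop F Mχ) := by
      rw [neg_sub]
    rw [this]
    simpa using hQC.neg
  simp only [ContinuousLinearMap.coe_comp']
  exact (hK.comp_clm (modCLM (-s))).clm_comp (modCLM s)

end Context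

end Stmt7Aux

set_option maxHeartbeats 2000000 in
open Stmt7Aux in
/-- For `a ∈ QC(ℝ)` (equivalently, `[P, M_a]` compact) and
`ϑ ∈ C([0,∞])`, the commutator `[T_a, D_ϑ]` is compact on `H²(ℍ)`.  Here `T_a = P M_a P`
and `D_ϑ = F⁻¹ M_ϑ F` compressed by `P`, acting on `L²(ℝ)` as extensions by zero of the
corresponding operators on `H² = ran P`. -/
theorem stmt7 (F : L2R ≃ₗᵢ[ℂ] L2R) (hF : IsFourierL2 F)
    (Mχ : L2R →L[ℂ] L2R)
    (hMχ : ∀ f : L2R, (Mχ f : ℝ → ℂ) =ᵐ[volume]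
      fun x => Set.indicator (Set.Ici (0 : ℝ)) (fun _ => (1 : ℂ)) x * f x)
    (a : ℝ → ℂ) (ha : Measurable a) (hab : ∃ C : ℝ, ∀ x, ‖a x‖ ≤ C)
    (Ma : L2R →L[ℂ] L2R)
    (hMa : ∀ f : L2R, (Ma f : ℝ → ℂ) =ᵐ[volume] fun x => a x * f x)
    (ϑ : ℝ → ℂ) (hϑc : Continuous ϑ) (L : ℂ) (hϑlim : Tendsto ϑ atTop (nhds L))
    (Mϑ : L2R →L[ℂ] L2R)
    (hMϑ : ∀ f : L2R, (Mϑ f : ℝ → ℂ) =ᵐ[volume] fun t => ϑ t * f t)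
    -- `P` is the Riesz projection, `D` the Fourier multiplier `D_ϑ`:
    (P D : L2R →L[ℂ] L2R)
    (hP : P = F.symm.toContinuousLinearEquiv.toContinuousLinearMap ∘L Mχ ∘L
      F.toContinuousLinearEquiv.toContinuousLinearMap)
    (hD : D = F.symm.toContinuousLinearEquiv.toContinuousLinearMap ∘L Mϑ ∘L
      F.toContinuousLinearEquiv.toContinuousLinearMap)
    -- `a ∈ QC(ℝ)`: the commutator of the Riesz projection with `M_a` is compact:
    (hQC : IsCompactOperator ⇑(P ∘L Ma - Ma ∘L P)) :
    IsCompactOperator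
      ⇑((P ∘L Ma ∘L P) ∘L (P ∘L D ∘L P) - (P ∘L D ∘L P) ∘L (P ∘L Ma ∘L P)) := by
  classical
  -- bound for the modified symbol ϑ̃ = ϑ(max · 0)
  obtain ⟨R₁, hR₁⟩ := Metric.tendsto_atTop.mp hϑlim 1 one_pos
  obtain ⟨C₀, hC₀⟩ := (isCompact_Icc (a := (0:ℝ)) (b := max R₁ 0)).exists_bound_of_continuousOn
    hϑc.continuousOn
  have hϑt_meas : Measurable (fun x : ℝ => ϑ (max x 0)) :=
    (hϑc.comp (continuous_id.max continuous_const)).measurable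
  have hϑt_bound : ∀ x : ℝ, ‖ϑ (max x 0)‖ ≤ max C₀ (‖L‖ + 1) := by
    intro x
    rcases le_or_gt (max x 0) (max R₁ 0) with h | h
    · exact le_trans (hC₀ _ ⟨le_max_right x 0, h⟩) (le_max_left _ _)
    · have hy : R₁ ≤ max x 0 := le_of_lt (lt_of_le_of_lt (le_max_left R₁ 0) h)
      have h1 := hR₁ (max x 0) hy
      rw [dist_eq_norm] at h1
      have h2 : ‖ϑ (max x 0)‖ - ‖L‖ ≤ ‖ϑ (max x 0) - L‖ := norm_sub_norm_le _ _
      have : ‖ϑ (max x 0)‖ ≤ ‖L‖ + 1 := by linarith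
      exact le_trans this (le_max_right _ _)
  set Mt : L2R →L[ℂ] L2R :=
    Stmt7Aux.mulCLM _ hϑt_meas (max C₀ (‖L‖ + 1)) hϑt_bound with hMtdef
  have hMtcoe : ∀ u : L2R, (Mt u : ℝ → ℂ) =ᵐ[volume]
      fun x => ϑ (max x 0) * (u : ℝ → ℂ) x :=
    fun u => Stmt7Aux.mulCLM_coe _ hϑt_meas _ hϑt_bound u
  set Dt : L2R →L[ℂ] L2R := F.symm.toContinuousLinearEquiv.toContinuousLinearMap ∘L Mt ∘L
    F.toContinuousLinearEquiv.toContinuousLinearMap with hDtdef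
  -- application formulas
  have hPapp : ∀ u : L2R, P u = F.symm (Mχ (F u)) := by
    intro u; rw [hP]
    simp only [ContinuousLinearMap.comp_apply, ContinuousLinearEquiv.coe_coe,
      LinearIsometryEquiv.coe_toContinuousLinearEquiv]
  have hDapp : ∀ u : L2R, D u = F.symm (Mϑ (F u)) := by
    intro u; rw [hD]
    simp only [ContinuousLinearMap.comp_apply, ContinuousLinearEquiv.coe_coe,
      LinearIsometryEquiv.coe_toContinuousLinearEquiv]
  have hDtapp : ∀ u : L2R, Dt u = F.symm (Mt (F u)) := by
    intro u; rw [hDtdef]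
    simp only [ContinuousLinearMap.comp_apply, ContinuousLinearEquiv.coe_coe,
      LinearIsometryEquiv.coe_toContinuousLinearEquiv]
  -- multiplier identities
  have hMM : ∀ u : L2R, Mχ (Mχ u) = Mχ u := by
    intro u; apply Lp.ext
    filter_upwards [hMχ (Mχ u), hMχ u] with x h1 h2
    rw [h1, h2]
    by_cases hx : x ∈ Set.Ici (0:ℝ) <;>
      simp [Set.indicator_of_mem, Set.indicator_of_notMem, hx]
  have hMtχ : ∀ u : L2R, Mχ (Mt u) = Mt (Mχ u) := by
    intro u; apply Lp.ext
    filter_upwards [hMχ (Mt u), hMtcoe u, hMtcoe (Mχ u), hMχ u] with x h1 h2 h3 h4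
    rw [h1, h2, h3, h4]; ring
  have hχϑχ : ∀ u : L2R, Mχ (Mϑ (Mχ u)) = Mt (Mχ u) := by
    intro u; apply Lp.ext
    filter_upwards [hMχ (Mϑ (Mχ u)), hMϑ (Mχ u), hMtcoe (Mχ u), hMχ u] with x h1 h2 h3 h4
    rw [h1, h2, h3, h4]
    by_cases hx : x ∈ Set.Ici (0:ℝ)
    · have hmax : max x 0 = x := max_eq_left hx
      simp [Set.indicator_of_mem hx, hmax]
    · simp [Set.indicator_of_notMem hx]
  -- pointwise operator identities
  have e1 : ∀ u : L2R, P (P u) = P u := by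
    intro u
    rw [hPapp u, hPapp, F.apply_symm_apply, hMM]
  have e3 : ∀ u : L2R, P (Dt u) = Dt (P u) := by
    intro u
    rw [hPapp u, hDtapp u, hPapp, F.apply_symm_apply, hDtapp, F.apply_symm_apply, hMtχ]
  have e2 : ∀ u : L2R, P (D (P u)) = Dt (P u) := by
    intro u
    rw [hPapp u, hDapp, F.apply_symm_apply, hPapp, F.apply_symm_apply,
      hDtapp, F.apply_symm_apply, hχϑχ]
  -- reduce the goal
  have hgoal : (P ∘L Ma ∘L P) ∘L (P ∘L D ∘L P) - (P ∘L D ∘L P) ∘L (P ∘L Ma ∘L P)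
      = P ∘L ((Ma ∘L Dt - Dt ∘L Ma) ∘L P) := by
    ext f
    simp only [ContinuousLinearMap.sub_apply, ContinuousLinearMap.comp_apply, map_sub]
    rw [e1 (D (P f)), e2 f, e1 (Ma (P f)), e2 (Ma (P f)), ← e3 (Ma (P f))]
  rw [hgoal]
  -- main compactness statement
  have hQCpop : IsCompactOperator ⇑(Stmt7Aux.Pop F Mχ ∘L Ma - Ma ∘L Stmt7Aux.Pop F Mχ) := by
    have hpop : Stmt7Aux.Pop F Mχ = P := by rw [hP]; rfl
    rw [hpop]; exact hQC
  have hTsc : ∀ s : ℝ, IsCompactOperator ⇑(Ma ∘L Stmt7Aux.Ts F s - Stmt7Aux.Ts F s ∘L Ma) :=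
    fun s => Stmt7Aux.comm_Ts_compact F hF Mχ hMχ a Ma hMa hQCpop s
  have hK : IsCompactOperator ⇑(Ma ∘L Dt - Dt ∘L Ma) := by
    have hclosed : IsClosed {T : L2R →L[ℂ] L2R | IsCompactOperator ⇑T} :=
      isClosed_setOf_isCompactOperator
    have hmem : (Ma ∘L Dt - Dt ∘L Ma) ∈ {T : L2R →L[ℂ] L2R | IsCompactOperator ⇑T} := by
      rw [← hclosed.closure_eq, Metric.mem_closure_iff]
      intro ε hε
      have hden : (0:ℝ) < 2 * ‖Ma‖ + 1 := by positivity
      set ε' : ℝ := ε / (2 * ‖Ma‖ + 1) with hε'def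
      have hε'pos : 0 < ε' := div_pos hε hden
      obtain ⟨c, m, pts, coef, hsup⟩ := Stmt7Aux.approx ϑ hϑc L hϑlim hε'pos
      set B : L2R →L[ℂ] L2R := F.symm.toContinuousLinearEquiv.toContinuousLinearMap ∘L
        Stmt7Aux.stepOp c m pts coef ∘L F.toContinuousLinearEquiv.toContinuousLinearMap with hBdef
      refine ⟨Ma ∘L B - B ∘L Ma, ?_, ?_⟩
      · -- the step commutator is compact
        have hBapp : ∀ u : L2R, B u = c • u + ∑ i ∈ Finset.range m,
            coef i • Stmt7Aux.Ts F (pts i) u := by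
          intro u
          rw [hBdef]
          simp only [Stmt7Aux.stepOp, Stmt7Aux.Ts, ContinuousLinearMap.comp_apply,
            ContinuousLinearEquiv.coe_coe, LinearIsometryEquiv.coe_toContinuousLinearEquiv,
            ContinuousLinearMap.add_apply, ContinuousLinearMap.smul_apply,
            ContinuousLinearMap.sum_apply, ContinuousLinearMap.id_apply, map_add,
            _root_.map_smul, map_sum, LinearIsometryEquiv.symm_apply_apply]
        have hBsum : Ma ∘L B - B ∘L Ma = ∑ i ∈ Finset.range m,
            coef i • (Ma ∘L Stmt7Aux.Ts F (pts i) - Stmt7Aux.Ts F (pts i) ∘L Ma) := by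
          ext f
          simp only [ContinuousLinearMap.sub_apply, ContinuousLinearMap.comp_apply,
            ContinuousLinearMap.sum_apply, ContinuousLinearMap.smul_apply]
          rw [hBapp f, hBapp (Ma f), map_add, _root_.map_smul, map_sum]
          simp only [_root_.map_smul (Ma), smul_sub]
          rw [Finset.sum_sub_distrib]
          abel_nf
          exact Filter.EventuallyEq.rfl
        show IsCompactOperator ⇑(Ma ∘L B - B ∘L Ma)
        rw [hBsum]
        refine Finset.sum_induction _ (fun T : L2R →L[ℂ] L2R => IsCompactOperator ⇑T)
          ?_ ?_ ?_
        · intro A A' hA hA'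
          have := hA.add hA'
          rw [ContinuousLinearMap.coe_add']
          exact this
        · simpa using (isCompactOperator_zero (M₁ := L2R) (M₂ := L2R))
        · intro i _
          have := (hTsc (pts i)).smul (coef i)
          rw [ContinuousLinearMap.coe_smul']
          exact this
      · -- the distance estimate
        have hDB : ‖Dt - B‖ ≤ ε' := by
          apply ContinuousLinearMap.opNorm_le_bound _ hε'pos.le
          intro f
          have h1 : (Dt - B) f = F.symm (Mt (F f) - Stmt7Aux.stepOp c m pts coef (F f)) := by
            simp only [hDtdef, hBdef, ContinuousLinearMap.sub_apply,
              ContinuousLinearMap.comp_apply, ContinuousLinearEquiv.coe_coe,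
              LinearIsometryEquiv.coe_toContinuousLinearEquiv, map_sub]
          rw [h1, LinearIsometryEquiv.norm_map]
          have h2 : ‖Mt (F f) - Stmt7Aux.stepOp c m pts coef (F f)‖ ≤ ε' * ‖F f‖ := by
            apply Stmt7Aux.norm_le_of_ae hε'pos.le
            filter_upwards [Lp.coeFn_sub (Mt (F f)) (Stmt7Aux.stepOp c m pts coef (F f)),
              hMtcoe (F f), Stmt7Aux.stepOp_coe c m pts coef (F f)] with x k1 k2 k3
            rw [k1]
            simp only [Pi.sub_apply]
            rw [k2, k3, ← sub_mul, norm_mul]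
            exact mul_le_mul_of_nonneg_right (hsup x) (norm_nonneg _)
          rw [F.norm_map] at h2
          exact h2
        rw [dist_eq_norm]
        have hdiff : (Ma ∘L Dt - Dt ∘L Ma) - (Ma ∘L B - B ∘L Ma)
            = Ma ∘L (Dt - B) - (Dt - B) ∘L Ma := by
          rw [ContinuousLinearMap.comp_sub, ContinuousLinearMap.sub_comp]; abel
        rw [hdiff]
        have hMa0 : (0:ℝ) ≤ ‖Ma‖ := norm_nonneg _
        calc ‖Ma ∘L (Dt - B) - (Dt - B) ∘L Ma‖
            ≤ ‖Ma ∘L (Dt - B)‖ + ‖(Dt - B) ∘L Ma‖ := norm_sub_le _ _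
          _ ≤ ‖Ma‖ * ‖Dt - B‖ + ‖Dt - B‖ * ‖Ma‖ :=
              add_le_add (ContinuousLinearMap.opNorm_comp_le _ _)
                (ContinuousLinearMap.opNorm_comp_le _ _)
          _ ≤ ‖Ma‖ * ε' + ε' * ‖Ma‖ :=
              add_le_add (mul_le_mul_of_nonneg_left hDB hMa0)
                (mul_le_mul_of_nonneg_right hDB hMa0)
          _ < ε := by
              have h1 : ε' * (2 * ‖Ma‖ + 1) = ε := div_mul_cancel₀ ε hden.ne'
              nlinarith [hε'pos, h1]
    exact hmem
  simp only [ContinuousLinearMap.coe_comp']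
  exact (hK.comp_clm P).clm_comp P


end
end
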